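/- arXiv:1910.14595 — 3 statements merged into one kernel-verified Lean document; each statement's English description precedes it below -/
import Mathlib

section
/- Let X be a quasi-compact scheme, D a Cartier divisor on X and E an effective Cartier divisor on X. If the restriction of D to the open subset X \ |E| is effective, then there exists a natural number n₀ ≥ 1 such that D + n·E is effective for every n ≥ n₀. -/
open AlgebraicGeometry CategoryTheory Opposite

noncomputable section

/-- Data presenting a Cartier divisor on a scheme `X`: an open cover together with,
on each member of the cover, a "rational function" written as a quotient `num / den` of
sections whose germs are nonzerodivisors, such that on overlaps the two rational functions
differ by a unit of the local ring at each point. -/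
structure CartierDivisorData (X : Scheme) where
  ι : Type
  U : ι → X.Opens
  covers : ∀ x : X, ∃ i, x ∈ U i
  num : ∀ i, Γ(X, U i)
  den : ∀ i, Γ(X, U i)
  num_reg : ∀ i (x : X) (hx : x ∈ U i),
    X.presheaf.germ (U i) x hx (num i) ∈ nonZeroDivisors (X.presheaf.stalk x)
  den_reg : ∀ i (x : X) (hx : x ∈ U i),
    X.presheaf.germ (U i) x hx (den i) ∈ nonZeroDivisors (X.presheaf.stalk x)
  compat : ∀ i j (x : X) (hi : x ∈ U i) (hj : x ∈ U j),
    ∃ u : (X.presheaf.stalk x)ˣ,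
      X.presheaf.germ (U i) x hi (num i) * X.presheaf.germ (U j) x hj (den j) =
        u * (X.presheaf.germ (U j) x hj (num j) * X.presheaf.germ (U i) x hi (den i))

namespace CartierDivisorData

variable {X : Scheme}

/-- A Cartier divisor is effective at a point `x` if its local equation at `x` lies in the
local ring, i.e. the denominator divides the numerator in the stalk at `x`. -/
def EffectiveAt (D : CartierDivisorData X) (x : X) : Prop :=
  ∀ i (hi : x ∈ D.U i), ∃ c : X.presheaf.stalk x,
    X.presheaf.germ (D.U i) x hi (D.num i) = c * X.presheaf.germ (D.U i) x hi (D.den i)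

/-- A Cartier divisor is effective if it is so at every point. -/
def Effective (D : CartierDivisorData X) : Prop := ∀ x : X, D.EffectiveAt x

/-- `D + n • E` is effective at `x`:  with `D = a/b` and `E = e/d` locally, this says
`a eⁿ` is divisible by `b dⁿ` in the stalk at `x`. -/
def AddSmulEffectiveAt (D E : CartierDivisorData X) (n : ℕ) (x : X) : Prop :=
  ∀ i j (hi : x ∈ D.U i) (hj : x ∈ E.U j),
    ∃ c : X.presheaf.stalk x,
      X.presheaf.germ (D.U i) x hi (D.num i) * (X.presheaf.germ (E.U j) x hj (E.num j)) ^ n =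
        c * (X.presheaf.germ (D.U i) x hi (D.den i) *
          (X.presheaf.germ (E.U j) x hj (E.den j)) ^ n)

/-- The support of an (effective) Cartier divisor: the points at which its local equation is
not a unit times the denominator, i.e. does not cut out the trivial divisor. -/
def support (E : CartierDivisorData X) : Set X :=
  {x | ∀ i (hi : x ∈ E.U i), ¬ ∃ u : (X.presheaf.stalk x)ˣ,
    X.presheaf.germ (E.U i) x hi (E.num i) =
      (u : X.presheaf.stalk x) * X.presheaf.germ (E.U i) x hi (E.den i)}

end CartierDivisorData


/-- From a divisibility in a localization at a prime, extract a divisibility in the ring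
up to a factor outside the prime. -/
lemma exists_mul_mem_span_of_isLocalization {R S : Type*} [CommRing R] [CommRing S]
    [Algebra R S] (p : Ideal R) [p.IsPrime] [IsLocalization.AtPrime S p] {a b : R}
    (h : ∃ c : S, algebraMap R S a = c * algebraMap R S b) :
    ∃ r ∉ p, r * a ∈ Ideal.span {b} := by
  obtain ⟨c, hc⟩ := h
  obtain ⟨⟨r', t⟩, rfl⟩ := IsLocalization.mk'_surjective p.primeCompl c
  dsimp only at hc
  have h1 : algebraMap R S ((t : R) * a) = algebraMap R S (r' * b) := by
    calc algebraMap R S ((t : R) * a)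
        = (IsLocalization.mk' S r' t * algebraMap R S (t : R)) * algebraMap R S b := by
          rw [map_mul, hc]; ring
      _ = algebraMap R S (r' * b) := by rw [IsLocalization.mk'_spec, map_mul]
  obtain ⟨u, hu⟩ := (IsLocalization.eq_iff_exists p.primeCompl S).mp h1
  refine ⟨(u : R) * (t : R), fun hmem => (p.primeCompl.mul_mem u.2 t.2) hmem, ?_⟩
  exact Ideal.mem_span_singleton'.mpr ⟨(u : R) * r', by linear_combination -hu⟩

/-- If `D + n⋅E` is effective at `x` as witnessed by one pair of indices, then it is
effective at `x` for all pairs of indices, by the compatibility conditions. -/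
lemma CartierDivisorData.addSmulEffectiveAt_of_pair {X : Scheme} (D E : CartierDivisorData X)
    {x : X} {i : D.ι} {j : E.ι} (hi : x ∈ D.U i) (hj : x ∈ E.U j) (n : ℕ)
    (h : ∃ c : X.presheaf.stalk x,
      X.presheaf.germ (D.U i) x hi (D.num i) * (X.presheaf.germ (E.U j) x hj (E.num j)) ^ n =
        c * (X.presheaf.germ (D.U i) x hi (D.den i) *
          (X.presheaf.germ (E.U j) x hj (E.den j)) ^ n)) :
    D.AddSmulEffectiveAt E n x := by
  obtain ⟨c, hc⟩ := h
  intro i' j' hi' hj'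
  obtain ⟨u, hu⟩ := D.compat i' i x hi' hi
  obtain ⟨v, hv⟩ := E.compat j' j x hj' hj
  refine ⟨(u : X.presheaf.stalk x) * (v : X.presheaf.stalk x) ^ n * c, ?_⟩
  have hreg : X.presheaf.germ (D.U i) x hi (D.den i) *
      (X.presheaf.germ (E.U j) x hj (E.den j)) ^ n ∈ nonZeroDivisors (X.presheaf.stalk x) :=
    mul_mem (D.den_reg i x hi) (pow_mem (E.den_reg j x hj) n)
  rw [← mul_cancel_right_mem_nonZeroDivisors hreg]
  have hvn : (X.presheaf.germ (E.U j') x hj' (E.num j') *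
        X.presheaf.germ (E.U j) x hj (E.den j)) ^ n =
      (v : X.presheaf.stalk x) ^ n * (X.presheaf.germ (E.U j) x hj (E.num j) *
        X.presheaf.germ (E.U j') x hj' (E.den j')) ^ n := by
    rw [hv, mul_pow]
  set A1 := X.presheaf.germ (D.U i) x hi (D.num i)
  set B1 := X.presheaf.germ (D.U i) x hi (D.den i)
  set A2 := X.presheaf.germ (D.U i') x hi' (D.num i')
  set B2 := X.presheaf.germ (D.U i') x hi' (D.den i')
  set E1 := X.presheaf.germ (E.U j) x hj (E.num j)
  set D1 := X.presheaf.germ (E.U j) x hj (E.den j)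
  set E2 := X.presheaf.germ (E.U j') x hj' (E.num j')
  set D2 := X.presheaf.germ (E.U j') x hj' (E.den j')
  linear_combination (E2 ^ n * D1 ^ n) * hu + ((u : X.presheaf.stalk x) * (A1 * B2)) * hvn +
    ((u : X.presheaf.stalk x) * (v : X.presheaf.stalk x) ^ n * B2 * D2 ^ n) * hc


/-- Key local statement: every point has an open neighbourhood `W` and a bound `N` such that
`D + n⋅E` is effective at every point of `W` for every `n ≥ N`. -/
lemma CartierDivisorData.exists_nhd_addSmulEffective {X : Scheme} (D E : CartierDivisorData X)
    (hE : E.Effective) (hres : ∀ x : X, x ∉ E.support → D.EffectiveAt x) (x : X) :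
    ∃ W : X.Opens, x ∈ W ∧ ∃ N : ℕ, ∀ y ∈ W, ∀ n, N ≤ n → D.AddSmulEffectiveAt E n y := by
  obtain ⟨i, hi⟩ := D.covers x
  obtain ⟨j, hj⟩ := E.covers x
  obtain ⟨W, hWaff, hxW, hWle⟩ := TopologicalSpace.Opens.isBasis_iff_nbhd.mp
    X.isBasis_affineOpens (show x ∈ D.U i ⊓ E.U j from ⟨hi, hj⟩)
  have hWD : W ≤ D.U i := le_trans hWle inf_le_left
  have hWE : W ≤ E.U j := le_trans hWle inf_le_right
  set a : Γ(X, W) := X.presheaf.map (homOfLE hWD).op (D.num i) with ha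
  set b : Γ(X, W) := X.presheaf.map (homOfLE hWD).op (D.den i) with hb
  set e : Γ(X, W) := X.presheaf.map (homOfLE hWE).op (E.num j) with he
  set d : Γ(X, W) := X.presheaf.map (homOfLE hWE).op (E.den j) with hd
  have mempt : ∀ q : PrimeSpectrum Γ(X, W), hWaff.fromSpec.base q ∈ W := fun q => by
    have : hWaff.fromSpec.base q ∈ (W : Set X) := hWaff.range_fromSpec ▸ Set.mem_range_self q
    exact this
  -- Step 1 : `e` is a multiple of `d` in `Γ(X, W)`.
  have step1 : ∃ s : Γ(X, W), s * d = e := by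
    have htop : (Ideal.span {d}).colon (Ideal.span {e}) = ⊤ := by
      by_contra hne
      obtain ⟨p, hpmax, hple⟩ := Ideal.exists_le_maximal _ hne
      haveI := hpmax.isPrime
      set q : PrimeSpectrum Γ(X, W) := ⟨p, hpmax.isPrime⟩ with hq
      set pt := hWaff.fromSpec.base q with hpt
      have hy := mempt q
      letI : Algebra Γ(X, W) (X.presheaf.stalk pt) :=
        TopCat.Presheaf.algebra_section_stalk X.presheaf ⟨pt, hy⟩
      haveI : IsLocalization.AtPrime (X.presheaf.stalk pt) p :=
        hWaff.isLocalization_stalk' q hy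
      obtain ⟨cc, hcc⟩ := hE pt j (hWE hy)
      have hcc' : algebraMap Γ(X, W) (X.presheaf.stalk pt) e
          = cc * algebraMap Γ(X, W) (X.presheaf.stalk pt) d := by
        rw [show (algebraMap Γ(X, W) (X.presheaf.stalk pt)) e
              = X.presheaf.germ (E.U j) pt (hWE hy) (E.num j) from
            X.presheaf.germ_res_apply (homOfLE hWE) pt hy (E.num j),
          show (algebraMap Γ(X, W) (X.presheaf.stalk pt)) d
              = X.presheaf.germ (E.U j) pt (hWE hy) (E.den j) from
            X.presheaf.germ_res_apply (homOfLE hWE) pt hy (E.den j)]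
        exact hcc
      obtain ⟨r, hrp, hr⟩ := exists_mul_mem_span_of_isLocalization p ⟨cc, hcc'⟩
      exact hrp (hple (Ideal.mem_colon_span_singleton.mpr hr))
    have h1 : (1 : Γ(X, W)) * e ∈ Ideal.span {d} :=
      Ideal.mem_colon_span_singleton.mp (by rw [htop]; exact Submodule.mem_top)
    rw [one_mul] at h1
    exact Ideal.mem_span_singleton'.mp h1
  obtain ⟨s, hs⟩ := step1
  -- Step 2 : `s` lies in the radical of the colon ideal `((b) : (a))`.
  set J := (Ideal.span {b}).colon (Ideal.span {a}) with hJ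
  have step2 : s ∈ J.radical := by
    rw [Ideal.radical_eq_sInf]
    refine Ideal.mem_sInf.mpr ?_
    rintro p ⟨hJp, hp⟩
    by_contra hsp
    haveI := hp
    set q : PrimeSpectrum Γ(X, W) := ⟨p, hp⟩ with hq
    set pt := hWaff.fromSpec.base q with hpt
    have hy := mempt q
    letI : Algebra Γ(X, W) (X.presheaf.stalk pt) :=
      TopCat.Presheaf.algebra_section_stalk X.presheaf ⟨pt, hy⟩
    haveI : IsLocalization.AtPrime (X.presheaf.stalk pt) p :=
      hWaff.isLocalization_stalk' q hy
    have hsu : IsUnit (algebraMap Γ(X, W) (X.presheaf.stalk pt) s) :=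
      (IsLocalization.AtPrime.isUnit_to_map_iff (X.presheaf.stalk pt) p s).mpr hsp
    have hnot : pt ∉ E.support := by
      intro hsupp
      refine hsupp j (hWE hy) ⟨hsu.unit, ?_⟩
      rw [show X.presheaf.germ (E.U j) pt (hWE hy) (E.num j)
            = algebraMap Γ(X, W) (X.presheaf.stalk pt) e from
          (X.presheaf.germ_res_apply (homOfLE hWE) pt hy (E.num j)).symm,
        show X.presheaf.germ (E.U j) pt (hWE hy) (E.den j)
            = algebraMap Γ(X, W) (X.presheaf.stalk pt) d from
          (X.presheaf.germ_res_apply (homOfLE hWE) pt hy (E.den j)).symm,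
        IsUnit.unit_spec, ← hs, map_mul]
    obtain ⟨cc, hcc⟩ := hres pt hnot i (hWD hy)
    have hcc' : algebraMap Γ(X, W) (X.presheaf.stalk pt) a
        = cc * algebraMap Γ(X, W) (X.presheaf.stalk pt) b := by
      rw [show (algebraMap Γ(X, W) (X.presheaf.stalk pt)) a
            = X.presheaf.germ (D.U i) pt (hWD hy) (D.num i) from
          X.presheaf.germ_res_apply (homOfLE hWD) pt hy (D.num i),
        show (algebraMap Γ(X, W) (X.presheaf.stalk pt)) b
            = X.presheaf.germ (D.U i) pt (hWD hy) (D.den i) from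
          X.presheaf.germ_res_apply (homOfLE hWD) pt hy (D.den i)]
      exact hcc
    obtain ⟨r, hrp, hr⟩ := exists_mul_mem_span_of_isLocalization p ⟨cc, hcc'⟩
    exact hrp (hJp (Ideal.mem_colon_span_singleton.mpr hr))
  obtain ⟨m, hm⟩ := Ideal.mem_radical_iff.mp step2
  obtain ⟨c, hcb⟩ := Ideal.mem_span_singleton'.mp (Ideal.mem_colon_span_singleton.mp hm)
  refine ⟨W, hxW, m, fun y hy n hn => ?_⟩
  apply D.addSmulEffectiveAt_of_pair E (hWD hy) (hWE hy) n
  have hR : a * e ^ n = (s ^ (n - m) * c) * (b * d ^ n) := by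
    have h1 : s ^ (n - m) * s ^ m = s ^ n := by rw [← pow_add]; congr 1; omega
    rw [← hs]
    linear_combination (-(s ^ (n - m) * d ^ n)) * hcb + (-(a * d ^ n)) * h1
  have hst := congrArg (X.presheaf.germ W y hy) hR
  rw [ha, hb, he, hd] at hst
  simp only [map_mul, map_pow] at hst
  rw [X.presheaf.germ_res_apply (homOfLE hWD) y hy (D.num i),
    X.presheaf.germ_res_apply (homOfLE hWD) y hy (D.den i),
    X.presheaf.germ_res_apply (homOfLE hWE) y hy (E.num j),
    X.presheaf.germ_res_apply (homOfLE hWE) y hy (E.den j)] at hst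
  exact ⟨_, hst⟩

/-- **(Miyazaki, Lem. 3.14.)** Let `X` be a quasi-compact scheme, `D` a Cartier divisor on `X`
and `E` an effective Cartier divisor on `X`.  If the restriction of `D` to the open subset
`X \ |E|` is effective, then there is `n₀ ≥ 1` such that `D + n·E` is effective for all
`n ≥ n₀`. -/
theorem exists_add_smul_effective {X : Scheme} [CompactSpace X]
    (D E : CartierDivisorData X) (hE : E.Effective)
    (hres : ∀ x : X, x ∉ E.support → D.EffectiveAt x) :
    ∃ n₀ : ℕ, 1 ≤ n₀ ∧ ∀ n, n₀ ≤ n → ∀ x : X, D.AddSmulEffectiveAt E n x := by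
  choose W hxW N hN using fun x => D.exists_nhd_addSmulEffective E hE hres x
  obtain ⟨t, ht⟩ := IsCompact.elim_finite_subcover isCompact_univ (fun x => (W x : Set X))
    (fun x => (W x).2) (fun y _ => Set.mem_iUnion.mpr ⟨y, hxW y⟩)
  refine ⟨max 1 (t.sup N), le_max_left _ _, fun n hn y => ?_⟩
  obtain ⟨z, hz, hyz⟩ := Set.mem_iUnion₂.mp (ht (Set.mem_univ y))
  exact hN z y hyz n (le_trans (le_trans (Finset.le_sup hz) (le_max_right _ _)) hn)

end
end

section
/- Let f : X → Y be a separated morphism of schemes and U ⊆ X an open dense subset. If the image f(U) is open in Y and the induced morphism U → f(U) is proper, then f⁻¹(f(U)) = U. -/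
open AlgebraicGeometry CategoryTheory CategoryTheory.Limits

lemma IsProper.of_comp' {X Y Z : Scheme} (f : X ⟶ Y) (g : Y ⟶ Z)
    [IsProper (f ≫ g)] [IsSeparated g] : IsProper f := by
  rw [← pullback.lift_snd (𝟙 _) f (Category.id_comp (f ≫ g))]
  haveI : MorphismProperty.IsStableUnderBaseChangeAlong @IsProper g :=
    ⟨fun pb h => MorphismProperty.IsStableUnderBaseChange.of_isPullback pb h⟩
  have h2 := MorphismProperty.pullback_snd (P := @IsProper) (f ≫ g) g inferInstance
  exact MorphismProperty.comp_mem @IsProper _ _ inferInstance h2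

/-- **(KMSY, Lem. 1.3.7.)** Let `f : X ⟶ Y` be a separated morphism of schemes, and `U ⊆ X`
an open dense subset.  If the image `f(U)` is open in `Y` and the induced morphism
`U ⟶ f(U)` is proper (e.g. an isomorphism), then `f⁻¹(f(U)) = U`. -/
theorem preimage_image_eq_of_proper_restriction {X Y : Scheme} (f : X ⟶ Y) [IsSeparated f]
    (U : X.Opens) (hdense : Dense (U : Set X))
    (himg : IsOpen (f.base '' (U : Set X)))
    (hle : U ≤ f ⁻¹ᵁ ⟨f.base '' (U : Set X), himg⟩)
    (hproper : IsProper (f.resLE ⟨f.base '' (U : Set X), himg⟩ U hle)) :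
    f.base ⁻¹' (f.base '' (U : Set X)) = (U : Set X) := by
  set V : Y.Opens := ⟨f.base '' (U : Set X), himg⟩ with hV
  set W : X.Opens := f ⁻¹ᵁ V with hW
  -- the restriction `f ∣_ V : W ⟶ V` is separated
  have hsep : IsSeparated (f.resLE V W le_rfl) := by
    rw [Scheme.Hom.resLE_eq_morphismRestrict]
    exact IsZariskiLocalAtTarget.restrict ‹IsSeparated f› V
  -- factor `U ⟶ V` through `W`
  have hfac : X.homOfLE hle ≫ f.resLE V W le_rfl = f.resLE V U hle :=
    Scheme.Hom.map_resLE _ _ _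
  have hproper' : IsProper (X.homOfLE hle ≫ f.resLE V W le_rfl) := by
    rw [hfac]; exact hproper
  have hprop : IsProper (X.homOfLE hle) :=
    IsProper.of_comp' (X.homOfLE hle) (f.resLE V W le_rfl)
  -- hence `U` is closed in `W`
  have hclosed : IsClosed (Set.range (X.homOfLE hle).base) :=
    (MorphismProperty.universally_le _ _ hprop.toUniversallyClosed.out : IsClosedMap _).isClosed_range
  -- the range is the preimage of `U` in `W`
  have hrange : Set.range (X.homOfLE hle).base
      = (Subtype.val : W → X) ⁻¹' (U : Set X) := by
    ext w
    constructor
    · rintro ⟨x, rfl⟩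
      have := X.homOfLE_apply hle x
      simp only [Set.mem_preimage, this]
      show (X.homOfLE hle x).1 ∈ (U : Set X)
      rw [this]
      exact x.2
    · intro hw
      refine ⟨⟨w.1, hw⟩, ?_⟩
      exact Subtype.ext (X.homOfLE_apply hle _)
  -- the range is dense in `W`
  have hdense' : Dense (Set.range (X.homOfLE hle).base) := by
    rw [hrange]
    exact hdense.preimage W.isOpen.isOpenMap_subtype_val
  have huniv : Set.range (X.homOfLE hle).base = Set.univ := by
    rw [← hclosed.closure_eq, hdense'.closure_eq]
  ext x
  constructor
  · intro hx
    have hxW : x ∈ W := hx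
    have : (⟨x, hxW⟩ : W) ∈ Set.range (X.homOfLE hle).base := huniv ▸ Set.mem_univ _
    rw [hrange] at this
    exact this
  · exact fun hx ↦ hle hx
end

section
/- Let C and D be sites whose topologies are generated by cd-structures P_C and P_D, and let u : C → D be a functor. Assume (1) P_D is complete, and (2) for every X' ∈ C and every distinguished square Q ∈ P_D with Q(11) = u(X'), there exists a distinguished square Q' ∈ P_C with u(Q') = Q and Q'(11) = X'. Then u is cocontinuous: for every X' ∈ C and every covering family {V_i → u(X')} in D, there is a covering family {U_j → X'} in C such that {u(U_j) → u(X')} refines {V_i → u(X')}. -/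
open CategoryTheory Limits

universe u v

variable {C : Type u} [Category.{v} C]

/-- A commutative square in a category `C`, with lower-right corner `X`, used as the datum of a
distinguished square of a cd-structure. -/
structure CDSquare (C : Type u) [Category.{v} C] where
  W : C
  Y : C
  A : C
  X : C
  t : W ⟶ Y
  l : W ⟶ A
  p : Y ⟶ X
  e : A ⟶ X
  comm : t ≫ p = l ≫ e

/-- The elementary cover `{p : Y ⟶ X, e : A ⟶ X}` associated to a distinguished square. -/
def CDSquare.elemPresieve (Q : CDSquare C) : Presieve Q.X :=
  Presieve.ofArrows (fun b : Bool => bif b then Q.Y else Q.A)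
    (fun b => Bool.rec (motive := fun b => (bif b then Q.Y else Q.A) ⟶ Q.X) Q.e Q.p b)

/-- The Grothendieck topology generated by a cd-structure `P`: the smallest topology in which
the elementary covers of all distinguished squares are covering. -/
def cdTopology (P : Set (CDSquare C)) : GrothendieckTopology C :=
  sInf {J | ∀ Q ∈ P, Sieve.generate Q.elemPresieve ∈ J Q.X}

/-- Simple covers with respect to a cd-structure: generated inductively from isomorphisms by
composing along distinguished squares. -/
inductive IsSimpleCover (P : Set (CDSquare C)) : (X : C) → Presieve X → Prop
  | of_iso {X Y : C} (f : Y ⟶ X) (hf : IsIso f) : IsSimpleCover P X (Presieve.singleton f)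
  | comp (Q : CDSquare C) (hQ : Q ∈ P) {Ry : Presieve Q.Y} {Ra : Presieve Q.A}
      (hy : IsSimpleCover P Q.Y Ry) (ha : IsSimpleCover P Q.A Ra) :
      IsSimpleCover P Q.X
        (fun _ g => (∃ h, Ry h ∧ g = h ≫ Q.p) ∨ (∃ h, Ra h ∧ g = h ≫ Q.e))

/-- A cd-structure is complete if every covering sieve of the associated topology can be
refined by a simple cover. -/
def IsCompleteCD (P : Set (CDSquare C)) : Prop :=
  ∀ (X : C) (S : Sieve X), S ∈ cdTopology P X →
    ∃ R : Presieve X, IsSimpleCover P X R ∧ ∀ ⦃Z : C⦄ (g : Z ⟶ X), R g → S g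

/-- The image of a square under a functor. -/
def CDSquare.map {C D : Type u} [Category.{v} C] [Category.{v} D]
    (u : C ⥤ D) (Q : CDSquare C) : CDSquare D where
  W := u.obj Q.W
  Y := u.obj Q.Y
  A := u.obj Q.A
  X := u.obj Q.X
  t := u.map Q.t
  l := u.map Q.l
  p := u.map Q.p
  e := u.map Q.e
  comm := by rw [← u.map_comp, ← u.map_comp, Q.comm]

private lemma cd_aux {C D : Type u} [Category.{v} C] [Category.{v} D]
    (P_C : Set (CDSquare C)) (P_D : Set (CDSquare D)) (u : C ⥤ D)
    (hlift : ∀ (X' : C) (Q : CDSquare D), Q ∈ P_D → Q.X = u.obj X' →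
      ∃ Q' ∈ P_C, Q'.X = X' ∧ Q'.map u = Q)
    (J : GrothendieckTopology C)
    (hJ : ∀ Q ∈ P_C, Sieve.generate Q.elemPresieve ∈ J Q.X) :
    ∀ {X : D} {R : Presieve X}, IsSimpleCover P_D X R →
      ∀ (X' : C) (h : u.obj X' = X) (S : Sieve X),
        (∀ ⦃Z : D⦄ (g : Z ⟶ X), R g → S g) →
        Sieve.functorPullback u (S.pullback (eqToHom h)) ∈ J X' := by
  intro X R hR
  induction hR with
  | of_iso f hf =>
    intro X' h S hRef
    apply J.superset_covering _ (J.top_mem X')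
    intro Z g _
    show S.arrows (u.map g ≫ eqToHom h)
    have heq : ((u.map g ≫ eqToHom h) ≫ inv f) ≫ f = u.map g ≫ eqToHom h := by simp
    rw [← heq]
    exact S.downward_closed (hRef f ⟨⟩) _
  | @comp Q hQ Ry Ra hy ha IHy IHa =>
    intro X' h S hRef
    obtain ⟨Q', hQ'P, hQ'X, hE⟩ := hlift X' Q hQ h.symm
    subst hE
    subst hQ'X
    have hgen := hJ Q' hQ'P
    apply J.transitive hgen
    rintro Z f ⟨W, a, b, hb, rfl⟩
    rw [Sieve.pullback_comp]
    apply J.pullback_stable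
    rcases hb with ⟨i⟩
    cases i with
    | true =>
      have key := IHy Q'.Y rfl ((S.pullback (eqToHom h)).pullback ((Q'.map u).p))
        (fun Z g hg => by change S.arrows ((g ≫ u.map Q'.p) ≫ 𝟙 _); simpa [CDSquare.map] using hRef _ (Or.inl ⟨g, hg, rfl⟩))
      apply J.superset_covering _ key
      intro Z g hg
      simp only [Sieve.functorPullback_apply, Presieve.functorPullback_mem,
        Sieve.pullback_apply, eqToHom_refl, Category.comp_id] at hg ⊢
      rw [Functor.map_comp]
      simpa [CDSquare.map] using (show S.arrows (((u.map g ≫ 𝟙 _) ≫ u.map Q'.p) ≫ 𝟙 _) from hg)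
    | false =>
      have key := IHa Q'.A rfl ((S.pullback (eqToHom h)).pullback ((Q'.map u).e))
        (fun Z g hg => by change S.arrows ((g ≫ u.map Q'.e) ≫ 𝟙 _); simpa [CDSquare.map] using hRef _ (Or.inr ⟨g, hg, rfl⟩))
      apply J.superset_covering _ key
      intro Z g hg
      simp only [Sieve.functorPullback_apply, Presieve.functorPullback_mem,
        Sieve.pullback_apply, eqToHom_refl, Category.comp_id] at hg ⊢
      rw [Functor.map_comp]
      simpa [CDSquare.map] using (show S.arrows (((u.map g ≫ 𝟙 _) ≫ u.map Q'.e) ≫ 𝟙 _) from hg)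

/-- **(Lemma on cocontinuity for cd-structures.)**  Let `C`, `D` be sites whose topologies are
generated by cd-structures `P_C` and `P_D` and let `u : C ⥤ D`.  Assume (1) `P_D` is complete
and (2) every distinguished square of `P_D` whose lower-right corner is of the form `u(X')`
lifts to a distinguished square of `P_C` with lower-right corner `X'`.  Then `u` is
cocontinuous: every covering family of `u(X')` in `D` is refined by the image of a covering
family of `X'` in `C`. -/
theorem cocontinuous_of_cd_lifting {C D : Type u} [Category.{v} C] [Category.{v} D]
    (P_C : Set (CDSquare C)) (P_D : Set (CDSquare D)) (u : C ⥤ D)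
    (hD : IsCompleteCD P_D)
    (hlift : ∀ (X' : C) (Q : CDSquare D), Q ∈ P_D → Q.X = u.obj X' →
      ∃ Q' ∈ P_C, Q'.X = X' ∧ Q'.map u = Q) :
    u.IsCocontinuous (cdTopology P_C) (cdTopology P_D) := by
  constructor
  intro X' S hS
  rw [cdTopology, GrothendieckTopology.mem_sInf]
  intro J hJ
  obtain ⟨R, hR, hRef⟩ := hD _ S hS
  have := cd_aux P_C P_D u hlift J hJ hR X' rfl S hRef
  simpa using this
end
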